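/- Blow-up comparison for the slope ODE: let b > 1 and M > 0, and suppose s : [0,T) → ℝ is differentiable with ds/dt ≤ −((b−1)/2) s² + M/2 and s(0) ≤ −√(M/(b−1))·κ for some κ > 1. Then s cannot exist (remain finite) for all t ≥ 0; in fact s(t) → −∞ by the finite time t* = (2/√(M(b−1))) arcoth(κ). -/

import Mathlib

set_option maxHeartbeats 1000000



private lemma slope_aux (ds si lv c : ℝ) (hP : lv - si ≠ 0) (hQ : -lv - si ≠ 0) :
    (1 / 2 : ℝ) * (-ds / (lv - si) - -ds / (-lv - si)) + c / 2 * lv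
      = lv * (2 * ds + c * ((lv - si) * (-lv - si))) / (2 * ((lv - si) * (-lv - si))) := by
  field_simp
  ring

/-- Blow-up comparison for the slope ODE: if `b > 1`, `M > 0`, `s` is differentiable
on `[0,T)` with `s' ≤ -((b-1)/2)s² + M/2` and `s 0 ≤ -√(M/(b-1))·κ` with `κ > 1`,
then `T ≤ (2/√(M(b-1))) arcoth κ`, where `arcoth κ = (1/2) ln((κ+1)/(κ-1))`. -/
theorem slope_blow_up (b M κ T : ℝ) (hb : 1 < b) (hM : 0 < M) (hκ : 1 < κ)
    (s : ℝ → ℝ)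
    (hdiff : ∀ t ∈ Set.Ico (0 : ℝ) T, DifferentiableAt ℝ s t)
    (hineq : ∀ t ∈ Set.Ico (0 : ℝ) T,
      deriv s t ≤ -((b - 1) / 2) * (s t) ^ 2 + M / 2)
    (hs0 : s 0 ≤ -(Real.sqrt (M / (b - 1)) * κ)) :
    T ≤ 2 / Real.sqrt (M * (b - 1)) * ((1 / 2) * Real.log ((κ + 1) / (κ - 1))) := by
  have hb1 : (0:ℝ) < b - 1 := by linarith
  set l : ℝ := Real.sqrt (M / (b - 1)) with hl_def
  have hl : 0 < l := Real.sqrt_pos.2 (div_pos hM hb1)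
  have hl2 : l ^ 2 = M / (b - 1) := Real.sq_sqrt (le_of_lt (div_pos hM hb1))
  have hal2 : (b - 1) / 2 * l ^ 2 = M / 2 := by
    rw [hl2]; field_simp
  set A : ℝ := (1 / 2) * Real.log ((κ + 1) / (κ - 1)) with hA_def
  have hA_pos : 0 < A := by
    have h1 : (1:ℝ) < (κ + 1) / (κ - 1) := by
      rw [lt_div_iff₀ (by linarith)]; linarith
    have h2 := Real.log_pos h1
    rw [hA_def]; linarith
  have hsqrtMb : Real.sqrt (M * (b - 1)) = l * (b - 1) := by
    rw [show M * (b - 1) = (l * (b - 1)) ^ 2 by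
      rw [mul_pow, hl2]; field_simp]
    exact Real.sqrt_sq (by positivity)
  set tstar : ℝ := 2 / Real.sqrt (M * (b - 1)) * A with ht_def
  have htstar_pos : 0 < tstar := by
    have h2 : 0 < 2 / Real.sqrt (M * (b - 1)) := by rw [hsqrtMb]; positivity
    exact mul_pos h2 hA_pos
  by_contra hcon
  push_neg at hcon
  have htT : tstar ∈ Set.Ico (0:ℝ) T := ⟨le_of_lt htstar_pos, hcon⟩
  clear_value l A tstar
  -- Step 1: invariance : s t ≤ s 0 on [0, T)
  have hmono : ∀ t ∈ Set.Ico (0:ℝ) T, s t ≤ s 0 := by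
    intro t ht
    have hsub : Set.Icc (0:ℝ) t ⊆ Set.Ico 0 T := fun x hx =>
      ⟨hx.1, lt_of_le_of_lt hx.2 ht.2⟩
    have hsub' : Set.Ico (0:ℝ) t ⊆ Set.Ico 0 T := fun x hx =>
      ⟨hx.1, lt_trans hx.2 ht.2⟩
    have bound : ∀ x ∈ Set.Ico (0:ℝ) t, s x = (fun _ => s 0) x → deriv s x < (fun _ => (0:ℝ)) x := by
      intro x hx hxeq
      simp only at hxeq
      have h1 := hineq x (hsub' hx)
      have h2 : s x ≤ -(l * κ) := by rw [hxeq]; exact hs0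
      have hsq : (l * κ) ^ 2 ≤ (s x) ^ 2 := by
        have h := pow_le_pow_left₀ (by positivity) (show l * κ ≤ -s x by linarith) 2
        rwa [neg_pow, neg_one_sq, one_mul] at h
      have h3 : (b - 1) / 2 * (l * κ) ^ 2 ≤ (b - 1) / 2 * (s x) ^ 2 :=
        mul_le_mul_of_nonneg_left hsq (by positivity)
      have h4 : (b - 1) / 2 * (l * κ) ^ 2 = M / 2 * κ ^ 2 := by
        rw [mul_pow, ← mul_assoc, hal2]
      have hκ2 : 1 < κ ^ 2 := by nlinarith
      have h5 : M / 2 < M / 2 * κ ^ 2 := by nlinarith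
      simp only
      linarith
    have := image_le_of_deriv_right_lt_deriv_boundary
      (f := s) (f' := deriv s) (a := 0) (b := t)
      (B := fun _ => s 0) (B' := fun _ => (0:ℝ))
      (fun x hx => ((hdiff x (hsub hx)).continuousAt).continuousWithinAt)
      (fun x hx => ((hdiff x (hsub' hx)).hasDerivAt).hasDerivWithinAt)
      le_rfl (fun x => hasDerivAt_const x (s 0))
      bound ⟨ht.1, le_refl t⟩
    exact this
  have hlt : ∀ x ∈ Set.Ico (0:ℝ) T, s x < -l := by
    intro x hx
    have h1 := hmono x hx
    nlinarith
  -- Step 2: the transformed function g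
  obtain ⟨g, hg_def⟩ : ∃ g : ℝ → ℝ, g = fun u =>
      (1 / 2) * (Real.log (l - s u) - Real.log (-l - s u)) + (b - 1) / 2 * l * u := ⟨_, rfl⟩
  have hg : ∀ u ∈ Set.Ico (0:ℝ) T, ∃ d, HasDerivAt g d u ∧ d ≤ 0 := by
    intro u hu
    rw [hg_def]
    have hsu := (hdiff u hu).hasDerivAt
    have hP : 0 < l - s u := by have := hlt u hu; linarith
    have hQ : 0 < -l - s u := by have := hlt u hu; linarith
    have h2 := (hsu.const_sub l).log hP.ne'
    have h4 := (hsu.const_sub (-l)).log hQ.ne'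
    have h5 := (h2.sub h4).const_mul (1/2 : ℝ)
    have h6 : HasDerivAt (fun x : ℝ => (b - 1) / 2 * l * x) ((b - 1) / 2 * l) u := by
      simpa using (hasDerivAt_id u).const_mul ((b - 1) / 2 * l)
    refine ⟨_, h5.add h6, ?_⟩
    have hds : deriv s u ≤ -((b - 1) / 2) * ((l - s u) * (-l - s u)) := by
      have h1 := hineq u hu
      have h2 : -((b - 1) / 2) * ((l - s u) * (-l - s u))
          = -((b - 1) / 2) * (s u) ^ 2 + (b - 1) / 2 * l ^ 2 := by ring
      rw [h2, hal2]
      exact h1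
    rw [slope_aux (deriv s u) (s u) l (b - 1) hP.ne' hQ.ne']
    apply div_nonpos_of_nonpos_of_nonneg
    · have h7 : 2 * deriv s u + (b - 1) * ((l - s u) * (-l - s u)) ≤ 0 := by linarith
      have h8 : 0 ≤ l := hl.le
      nlinarith
    · positivity
  -- g is antitone on [0, tstar]
  have hsubt : Set.Icc (0:ℝ) tstar ⊆ Set.Ico 0 T := fun x hx =>
    ⟨hx.1, lt_of_le_of_lt hx.2 hcon⟩
  have hcont : ContinuousOn g (Set.Icc 0 tstar) := by
    intro x hx
    obtain ⟨d, hd, _⟩ := hg x (hsubt hx)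
    exact hd.continuousAt.continuousWithinAt
  have hdiffg : DifferentiableOn ℝ g (interior (Set.Icc 0 tstar)) := by
    intro x hx
    rw [interior_Icc] at hx
    obtain ⟨d, hd, _⟩ := hg x (hsubt (Set.Ioo_subset_Icc_self hx))
    exact hd.differentiableAt.differentiableWithinAt
  have hderivg : ∀ x ∈ interior (Set.Icc (0:ℝ) tstar), deriv g x ≤ 0 := by
    intro x hx
    rw [interior_Icc] at hx
    obtain ⟨d, hd, hd0⟩ := hg x (hsubt (Set.Ioo_subset_Icc_self hx))
    rw [hd.deriv]; exact hd0
  have hganti : g tstar ≤ g 0 :=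
    antitoneOn_of_deriv_nonpos (convex_Icc (0:ℝ) tstar) hcont hdiffg hderivg
      ⟨le_rfl, htstar_pos.le⟩ ⟨htstar_pos.le, le_rfl⟩ htstar_pos.le
  -- g 0 ≤ A
  have h0T : (0:ℝ) ∈ Set.Ico (0:ℝ) T := ⟨le_rfl, lt_trans htstar_pos hcon⟩
  have hg0 : g 0 ≤ A := by
    have hP : 0 < l - s 0 := by have := hlt 0 h0T; linarith
    have hQ : 0 < -l - s 0 := by have := hlt 0 h0T; linarith
    have h1 : Real.log (l - s 0) - Real.log (-l - s 0)
        = Real.log ((l - s 0) / (-l - s 0)) := (Real.log_div hP.ne' hQ.ne').symm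
    have h2 : (l - s 0) / (-l - s 0) ≤ (κ + 1) / (κ - 1) := by
      rw [div_le_div_iff₀ hQ (by linarith)]
      nlinarith
    have h3 : Real.log ((l - s 0) / (-l - s 0)) ≤ Real.log ((κ + 1) / (κ - 1)) :=
      Real.log_le_log (div_pos hP hQ) h2
    have hgeq : g 0 = (1 / 2) * (Real.log (l - s 0) - Real.log (-l - s 0)) := by
      rw [hg_def]; simp
    rw [hgeq, h1, hA_def]
    linarith
  -- g tstar > A
  have hgt : A < g tstar := by
    have hP : s tstar < -l := hlt tstar htT
    have h1 : Real.log (-l - s tstar) < Real.log (l - s tstar) :=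
      Real.log_lt_log (by linarith) (by linarith)
    have h2 : (b - 1) / 2 * l * tstar = A := by
      rw [ht_def, hsqrtMb]
      field_simp
    have hgeq : g tstar = (1 / 2) * (Real.log (l - s tstar) - Real.log (-l - s tstar))
        + (b - 1) / 2 * l * tstar := by rw [hg_def]
    rw [hgeq, h2]
    linarith
  linarith
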